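/- Let T ∈ (0,1), G = N ≥ 1, and define the expected payment of a worker who answers the set A ⊆ {1,...,N} of questions (choosing her most likely answer for each) under the mechanism f(y) = μ_max T^G ∏ α_{y_i} (α_{-1}=0, α_0=1, α_1=1/T) as E(A) = μ_max T^G ∏_{i∈A} (p_i/T), where p_i ∈ (0,1] is her confidence for question i. If the p_i satisfy p_i ≠ T for all i, then E(A) is uniquely maximized at A* = {i : p_i > T}. -/
import Mathlib


/-- Theorem 1, G = N: the expected payment E(A) = μ_max T^G ∏_{i∈A}(p_i/T)
is uniquely maximized at the set of questions with confidence above T. -/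
theorem skip_incentive_compatible
    (N : ℕ) (hN : 1 ≤ N) (T μmax : ℝ) (hT0 : 0 < T) (hT1 : T < 1) (hμ : 0 < μmax)
    (p : Fin N → ℝ) (hp0 : ∀ i, 0 < p i) (hp1 : ∀ i, p i ≤ 1) (hpT : ∀ i, p i ≠ T)
    (E : Finset (Fin N) → ℝ)
    (hE : ∀ A : Finset (Fin N), E A = μmax * T ^ N * ∏ i ∈ A, p i / T) :
    ∀ A : Finset (Fin N), A ≠ Finset.univ.filter (fun i => T < p i) →
      E A < E (Finset.univ.filter (fun i => T < p i)) := by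
  intro A hA
  set S : Finset (Fin N) := Finset.univ.filter (fun i => T < p i) with hS
  have hq0 : ∀ i, 0 < p i / T := fun i => div_pos (hp0 i) hT0
  have hqgt : ∀ i ∈ S, 1 < p i / T := by
    intro i hi
    rw [hS, Finset.mem_filter] at hi
    exact (one_lt_div hT0).mpr hi.2
  have hqlt : ∀ i ∉ S, p i / T < 1 := by
    intro i hi
    rw [hS, Finset.mem_filter] at hi
    push_neg at hi
    have : p i < T := lt_of_le_of_ne (hi (Finset.mem_univ i)) (hpT i)
    exact (div_lt_one hT0).mpr this
  rw [hE A, hE S]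
  have hc : 0 < μmax * T ^ N := mul_pos hμ (pow_pos hT0 N)
  apply mul_lt_mul_of_pos_left _ hc
  have hsplit : (∏ i ∈ A, p i / T) = (∏ i ∈ A ∩ S, p i / T) * ∏ i ∈ A \ S, p i / T :=
    (Finset.prod_inter_mul_prod_diff A S _).symm
  have hsplitS : (∏ i ∈ S, p i / T) = (∏ i ∈ A ∩ S, p i / T) * ∏ i ∈ S \ A, p i / T := by
    rw [← Finset.prod_inter_mul_prod_diff S A fun i => p i / T, Finset.inter_comm]
  have hpos_inter : 0 < ∏ i ∈ A ∩ S, p i / T := Finset.prod_pos fun i _ => hq0 i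
  have hge1 : 1 ≤ ∏ i ∈ S \ A, p i / T := by
    rw [← Finset.prod_const_one (s := S \ A)]
    exact Finset.prod_le_prod (fun i _ => zero_le_one)
      (fun i hi => (hqgt i (Finset.mem_sdiff.mp hi).1).le)
  rcases Finset.eq_empty_or_nonempty (A \ S) with hAS | hAS
  · -- A ⊆ S, so S \ A is nonempty since A ≠ S
    have hsub : A ⊆ S := by
      intro i hi
      by_contra h
      exact (Finset.eq_empty_iff_forall_notMem.mp hAS i) (Finset.mem_sdiff.mpr ⟨hi, h⟩)
    have hne : (S \ A).Nonempty := by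
      rw [Finset.sdiff_nonempty]
      intro h
      exact hA (le_antisymm hsub h)
    have h1 : 1 < ∏ i ∈ S \ A, p i / T := by
      obtain ⟨j, hj⟩ := hne
      rw [← Finset.mul_prod_erase _ _ hj]
      have hrest : 1 ≤ ∏ i ∈ (S \ A).erase j, p i / T := by
        rw [← Finset.prod_const_one (s := (S \ A).erase j)]
        exact Finset.prod_le_prod (fun i _ => zero_le_one)
          (fun i hi => (hqgt i (Finset.mem_sdiff.mp (Finset.mem_of_mem_erase hi)).1).le)
      calc (1 : ℝ) < p j / T := hqgt j (Finset.mem_sdiff.mp hj).1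
        _ = (p j / T) * 1 := (mul_one _).symm
        _ ≤ (p j / T) * ∏ i ∈ (S \ A).erase j, p i / T :=
            mul_le_mul_of_nonneg_left hrest (hq0 j).le
    rw [hsplit, hsplitS, hAS]
    simp only [Finset.prod_empty, mul_one]
    calc (∏ i ∈ A ∩ S, p i / T) = (∏ i ∈ A ∩ S, p i / T) * 1 := (mul_one _).symm
      _ < (∏ i ∈ A ∩ S, p i / T) * ∏ i ∈ S \ A, p i / T :=
          mul_lt_mul_of_pos_left h1 hpos_inter
  · have hlt1 : (∏ i ∈ A \ S, p i / T) < 1 := by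
      obtain ⟨j, hj⟩ := hAS
      rw [← Finset.mul_prod_erase _ _ hj]
      have hrest : (∏ i ∈ (A \ S).erase j, p i / T) ≤ 1 :=
        Finset.prod_le_one (fun i _ => (hq0 i).le)
          (fun i hi => (hqlt i (Finset.mem_sdiff.mp (Finset.mem_of_mem_erase hi)).2).le)
      calc (p j / T) * ∏ i ∈ (A \ S).erase j, p i / T
          ≤ (p j / T) * 1 := mul_le_mul_of_nonneg_left hrest (hq0 j).le
        _ = p j / T := mul_one _
        _ < 1 := hqlt j (Finset.mem_sdiff.mp hj).2
    rw [hsplit, hsplitS]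
    calc (∏ i ∈ A ∩ S, p i / T) * ∏ i ∈ A \ S, p i / T
        < (∏ i ∈ A ∩ S, p i / T) * 1 := mul_lt_mul_of_pos_left hlt1 hpos_inter
      _ = ∏ i ∈ A ∩ S, p i / T := mul_one _
      _ = (∏ i ∈ A ∩ S, p i / T) * 1 := (mul_one _).symm
      _ ≤ (∏ i ∈ A ∩ S, p i / T) * ∏ i ∈ S \ A, p i / T :=
          mul_le_mul_of_nonneg_left hge1 hpos_inter.le
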